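/- Let g : ℝ → ℝ be continuous with g(z)·z < 0 for all z ≠ 0, and let u ∈ C²(ℝ^N) be a solution of -Δu = g(u) which is localized (u(x) → 0 as |x| → ∞). Then u ≡ 0. -/

import Mathlib

open MeasureTheory Filter

/-- The Laplacian of `u : ℝ^N → ℝ`, as the sum of second directional derivatives
along the standard basis vectors. -/
noncomputable def lap {N : ℕ} (u : EuclideanSpace ℝ (Fin N) → ℝ)
    (x : EuclideanSpace ℝ (Fin N)) : ℝ :=
  ∑ i : Fin N, iteratedFDeriv ℝ 2 u x ![EuclideanSpace.single i (1 : ℝ),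
    EuclideanSpace.single i (1 : ℝ)]

/-- If `g` is continuous and `g(z)·z < 0` for `z ≠ 0`, then any localized `C²` solution of
`-Δu = g(u)` on `ℝ^N` is identically zero. -/
lemma second_deriv_nonpos_at_max {E : Type*} [NormedAddCommGroup E] [NormedSpace ℝ E]
    (u : E → ℝ) (hu : ContDiff ℝ 2 u) (x₀ : E) (hmax : ∀ y, u y ≤ u x₀) (v : E) :
    iteratedFDeriv ℝ 2 u x₀ ![v, v] ≤ 0 := by
  have hdiff : Differentiable ℝ u := hu.differentiable (by norm_num)
  have hdu : ContDiff ℝ 1 (fderiv ℝ u) := hu.fderiv_right (by norm_num)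
  have hL : ∀ t : ℝ, HasDerivAt (fun s : ℝ => x₀ + s • v) v t := by
    intro t
    simpa using ((hasDerivAt_id t).smul_const v).const_add x₀
  set φ : ℝ → ℝ := fun t => u (x₀ + t • v) with hφdef
  set φ' : ℝ → ℝ := fun t => fderiv ℝ u (x₀ + t • v) v with hφ'def
  have hφ : ∀ t : ℝ, HasDerivAt φ (φ' t) t := fun t =>
    (hdiff (x₀ + t • v)).hasFDerivAt.comp_hasDerivAt t (hL t)
  have h00 : x₀ + (0 : ℝ) • v = x₀ := by simp
  have hlm : IsLocalMax u x₀ := Filter.Eventually.of_forall hmax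
  have hgrad : fderiv ℝ u x₀ = 0 := hlm.fderiv_eq_zero
  have hφ'0 : φ' 0 = 0 := by simp [hφ'def, h00, hgrad]
  rw [iteratedFDeriv_two_apply]
  simp only [Matrix.cons_val_zero, Matrix.cons_val_one, Matrix.head_cons]
  by_contra hc
  push_neg at hc
  set c : ℝ := fderiv ℝ (fderiv ℝ u) x₀ v v with hcdef
  -- φ' has derivative c at 0
  have h1 : HasDerivAt (fun t : ℝ => fderiv ℝ u (x₀ + t • v)) (fderiv ℝ (fderiv ℝ u) x₀ v) 0 := by
    have := (hdu.differentiable (by norm_num) (x₀ + (0 : ℝ) • v)).hasFDerivAt.comp_hasDerivAt 0 (hL 0)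
    simpa [h00, Function.comp_def] using this
  have hφ'c : HasDerivAt φ' c 0 := by
    have := h1.clm_apply (hasDerivAt_const 0 v)
    simpa [h00, hgrad, hcdef] using this
  -- slope of φ' at 0 tends to c > 0, hence φ' > 0 on a right neighborhood
  have hslope : Filter.Tendsto (slope φ' 0) (nhdsWithin 0 {(0:ℝ)}ᶜ) (nhds c) :=
    hasDerivAt_iff_tendsto_slope.mp hφ'c
  have hev : ∀ᶠ t in nhdsWithin (0:ℝ) {(0:ℝ)}ᶜ, 0 < slope φ' 0 t :=
    hslope.eventually (eventually_gt_nhds hc)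
  have hev' : ∀ᶠ t in nhdsWithin (0:ℝ) (Set.Ioi 0), 0 < φ' t := by
    have hmono : nhdsWithin (0:ℝ) (Set.Ioi 0) ≤ nhdsWithin (0:ℝ) {(0:ℝ)}ᶜ :=
      nhdsWithin_mono _ (fun t ht => ne_of_gt ht)
    filter_upwards [hev.filter_mono hmono, self_mem_nhdsWithin] with t ht ht0
    have ht0' : (0:ℝ) < t := ht0
    have : slope φ' 0 t = φ' t / t := by
      simp [slope, hφ'0, div_eq_inv_mul]
    rw [this] at ht
    exact (div_pos_iff.mp ht).resolve_right (fun h => absurd h.2 (not_lt.mpr ht0'.le)) |>.1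
  obtain ⟨ε, hε, hsub⟩ := mem_nhdsGT_iff_exists_Ioo_subset.mp hev'
  have hεpos : (0:ℝ) < ε := hε
  have hφcont : ContinuousOn φ (Set.Icc 0 ε) :=
    (hu.continuous.comp (by continuity)).continuousOn
  have hmono : StrictMonoOn φ (Set.Icc 0 ε) := by
    apply strictMonoOn_of_deriv_pos (convex_Icc 0 ε) hφcont
    intro t ht
    rw [interior_Icc] at ht
    rw [(hφ t).deriv]
    exact hsub ht
  have hlt : φ 0 < φ ε :=
    hmono (Set.left_mem_Icc.mpr hεpos.le) (Set.right_mem_Icc.mpr hεpos.le) hεpos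
  have : φ ε ≤ φ 0 := by
    simpa [hφdef, h00] using hmax (x₀ + ε • v)
  linarith

lemma second_deriv_nonneg_at_min {E : Type*} [NormedAddCommGroup E] [NormedSpace ℝ E]
    (u : E → ℝ) (hu : ContDiff ℝ 2 u) (x₀ : E) (hmin : ∀ y, u x₀ ≤ u y) (v : E) :
    0 ≤ iteratedFDeriv ℝ 2 u x₀ ![v, v] := by
  have := second_deriv_nonpos_at_max (-u) hu.neg x₀ (fun y => neg_le_neg (hmin y)) v
  rw [iteratedFDeriv_neg_apply] at this
  simpa using this

theorem stmt_1 {N : ℕ} (hN : 1 ≤ N) (g : ℝ → ℝ) (hg : Continuous g)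
    (hsign : ∀ z : ℝ, z ≠ 0 → g z * z < 0)
    (u : EuclideanSpace ℝ (Fin N) → ℝ) (hu : ContDiff ℝ 2 u)
    (heq : ∀ x, -lap u x = g (u x))
    (hloc : Tendsto u (cocompact (EuclideanSpace ℝ (Fin N))) (nhds 0)) :
    ∀ x, u x = 0 := by
  intro x
  by_contra hx
  rcases lt_or_gt_of_ne hx with hneg | hpos
  · -- u x < 0 : take a global minimum point
    obtain ⟨x₀, hx₀⟩ : ∃ x₀, ∀ y, u x₀ ≤ u y := by
      apply hu.continuous.exists_forall_le' x
      exact hloc.eventually (eventually_ge_nhds hneg)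
    have hx₀neg : u x₀ < 0 := lt_of_le_of_lt (hx₀ x) hneg
    have hlap : 0 ≤ lap u x₀ :=
      Finset.sum_nonneg fun i _ => second_deriv_nonneg_at_min u hu x₀ hx₀ _
    have hg : g (u x₀) ≤ 0 := by
      have := heq x₀
      linarith
    have := hsign (u x₀) (ne_of_lt hx₀neg)
    nlinarith
  · -- u x > 0 : take a global maximum point
    obtain ⟨x₀, hx₀⟩ : ∃ x₀, ∀ y, u y ≤ u x₀ := by
      apply hu.continuous.exists_forall_ge' x
      exact hloc.eventually (eventually_le_nhds hpos)
    have hx₀pos : 0 < u x₀ := lt_of_lt_of_le hpos (hx₀ x)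
    have hlap : lap u x₀ ≤ 0 :=
      Finset.sum_nonpos fun i _ => second_deriv_nonpos_at_max u hu x₀ hx₀ _
    have hg : 0 ≤ g (u x₀) := by
      have := heq x₀
      linarith
    have := hsign (u x₀) (ne_of_gt hx₀pos)
    nlinarith
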